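/- arXiv:1202.1484 — 2 statements merged into one kernel-verified Lean document; each statement's English description precedes it below -/
import Mathlib

section
/- For any joint distribution of the form P_A(a)·P_{S_e,S_d|A}(s_e,s_d|a)·P_{X|A,S_e}(x|a,s_e)·P_{Y|X,S_e,S_d}(y|x,s_e,s_d) on finite sets, the inequality I(A,S_e,X; Y,S_d) − H(S_e | A) ≤ I(A,X; Y,S_d) − I(X; S_e | A) holds. -/
open Finset
noncomputable section
namespace IT

variable {Ω : Type} [Fintype Ω]

/-- Marginal probability mass of the event `X = a` under the weight function `p`. -/
def marg {α : Type} [Fintype α] [DecidableEq α]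
    (p : Ω → ℝ) (X : Ω → α) (a : α) : ℝ :=
  ∑ ω, if X ω = a then p ω else 0

/-- Shannon entropy (natural logarithm) of the random variable `X`. -/
def ent {α : Type} [Fintype α] [DecidableEq α] (p : Ω → ℝ) (X : Ω → α) : ℝ :=
  ∑ a, Real.negMulLog (marg p X a)

/-- Conditional entropy `H(X | Y)`. -/
def condEnt {α β : Type} [Fintype α] [DecidableEq α] [Fintype β] [DecidableEq β]
    (p : Ω → ℝ) (X : Ω → α) (Y : Ω → β) : ℝ :=
  ent p (fun ω => (X ω, Y ω)) - ent p Y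

/-- Mutual information `I(X; Y)`. -/
def mi {α β : Type} [Fintype α] [DecidableEq α] [Fintype β] [DecidableEq β]
    (p : Ω → ℝ) (X : Ω → α) (Y : Ω → β) : ℝ :=
  ent p X + ent p Y - ent p (fun ω => (X ω, Y ω))

/-- Conditional mutual information `I(X; Y | Z)`. -/
def condMI {α β γ : Type} [Fintype α] [DecidableEq α] [Fintype β] [DecidableEq β]
    [Fintype γ] [DecidableEq γ]
    (p : Ω → ℝ) (X : Ω → α) (Y : Ω → β) (Z : Ω → γ) : ℝ :=
  condEnt p X Z + condEnt p Y Z - condEnt p (fun ω => (X ω, Y ω)) Z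

/-- `X` and `Y` are conditionally independent given `Z`:
`P(X=a, Z=c) ⬝ P(Y=b, Z=c) = P(X=a, Y=b, Z=c) ⬝ P(Z=c)`. -/
def CondIndep {α β γ : Type} [Fintype α] [DecidableEq α] [Fintype β] [DecidableEq β]
    [Fintype γ] [DecidableEq γ]
    (p : Ω → ℝ) (X : Ω → α) (Y : Ω → β) (Z : Ω → γ) : Prop :=
  ∀ a b c,
    marg p (fun ω => (X ω, Z ω)) (a, c) * marg p (fun ω => (Y ω, Z ω)) (b, c) =
    marg p (fun ω => (X ω, Y ω, Z ω)) (a, b, c) * marg p Z c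

/-- `p` is a probability mass function on `Ω`. -/
def IsProb (p : Ω → ℝ) : Prop := (∀ ω, 0 ≤ p ω) ∧ ∑ ω, p ω = 1

end IT

section Aux
open Real
variable {Ω : Type} [Fintype Ω]

lemma negMulLog_add_le' {a b : ℝ} (ha : 0 ≤ a) (hb : 0 ≤ b) :
    Real.negMulLog (a + b) ≤ Real.negMulLog a + Real.negMulLog b := by
  simp only [Real.negMulLog]
  have h1 : a * Real.log a ≤ a * Real.log (a + b) := by
    rcases eq_or_lt_of_le ha with h | h
    · simp [← h]
    · exact mul_le_mul_of_nonneg_left (Real.log_le_log h (by linarith)) ha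
  have h2 : b * Real.log b ≤ b * Real.log (a + b) := by
    rcases eq_or_lt_of_le hb with h | h
    · simp [← h]
    · exact mul_le_mul_of_nonneg_left (Real.log_le_log h (by linarith)) hb
  nlinarith

lemma negMulLog_sum_le' {ι : Type} [Fintype ι] (f : ι → ℝ) (hf : ∀ i, 0 ≤ f i) :
    Real.negMulLog (∑ i, f i) ≤ ∑ i, Real.negMulLog (f i) := by
  classical
  induction (Finset.univ : Finset ι) using Finset.cons_induction with
  | empty => simp [Real.negMulLog]
  | cons i s hi ih =>
    rw [Finset.sum_cons, Finset.sum_cons]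
    calc Real.negMulLog (f i + ∑ j ∈ s, f j)
        ≤ Real.negMulLog (f i) + Real.negMulLog (∑ j ∈ s, f j) :=
          negMulLog_add_le' (hf i) (Finset.sum_nonneg fun j _ => hf j)
      _ ≤ _ := by linarith

lemma marg_nonneg' {α : Type} [Fintype α] [DecidableEq α] {p : Ω → ℝ}
    (hp : ∀ ω, 0 ≤ p ω) (X : Ω → α) (a : α) : 0 ≤ IT.marg p X a := by
  apply Finset.sum_nonneg
  intro ω _
  split <;> [exact hp ω; exact le_refl 0]

lemma marg_fst' {α β : Type} [Fintype α] [DecidableEq α] [Fintype β] [DecidableEq β]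
    (p : Ω → ℝ) (X : Ω → α) (Y : Ω → β) (a : α) :
    IT.marg p X a = ∑ b, IT.marg p (fun ω => (X ω, Y ω)) (a, b) := by
  unfold IT.marg
  rw [Finset.sum_comm]
  apply Finset.sum_congr rfl
  intro ω _
  by_cases h : X ω = a
  · simp [h, Prod.ext_iff]
  · simp [h, Prod.ext_iff]

lemma ent_le_pair' {α β : Type} [Fintype α] [DecidableEq α] [Fintype β] [DecidableEq β]
    {p : Ω → ℝ} (hp : ∀ ω, 0 ≤ p ω) (X : Ω → α) (Y : Ω → β) :
    IT.ent p X ≤ IT.ent p (fun ω => (X ω, Y ω)) := by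
  unfold IT.ent
  rw [Fintype.sum_prod_type]
  apply Finset.sum_le_sum
  intro a _
  rw [marg_fst' p X Y a]
  exact negMulLog_sum_le' _ (fun b => marg_nonneg' hp _ _)

lemma ent_comp_equiv' {α β : Type} [Fintype α] [DecidableEq α] [Fintype β] [DecidableEq β]
    (p : Ω → ℝ) (e : α ≃ β) (X : Ω → α) :
    IT.ent p (fun ω => e (X ω)) = IT.ent p X := by
  unfold IT.ent
  rw [← Equiv.sum_comp e (fun b => Real.negMulLog (IT.marg p (fun ω => e (X ω)) b))]
  apply Finset.sum_congr rfl
  intro a _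
  congr 1
  unfold IT.marg
  apply Finset.sum_congr rfl
  intro ω _
  simp [e.injective.eq_iff]

end Aux

section Channel
variable {At Et Dt Xt Yt : Type}
  [Fintype At] [DecidableEq At] [Fintype Et] [DecidableEq Et]
  [Fintype Dt] [DecidableEq Dt] [Fintype Xt] [DecidableEq Xt]
  [Fintype Yt] [DecidableEq Yt]

/-- `I(A,S_e,X; Y,S_d) − H(S_e | A) ≤ I(A,X; Y,S_d) − I(X; S_e | A)`. -/
theorem stmt4
    (p : At × Et × Dt × Xt × Yt → ℝ)
    (PA : At → ℝ) (PS : Et × Dt → At → ℝ)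
    (PX : Xt → At → Et → ℝ) (PY : Yt → Xt → Et → Dt → ℝ)
    (hPA0 : ∀ a, 0 ≤ PA a) (hPA1 : ∑ a, PA a = 1)
    (hPS0 : ∀ s a, 0 ≤ PS s a) (hPS1 : ∀ a, ∑ s, PS s a = 1)
    (hPX0 : ∀ x a e, 0 ≤ PX x a e) (hPX1 : ∀ a e, ∑ x, PX x a e = 1)
    (hPY0 : ∀ y x e d, 0 ≤ PY y x e d) (hPY1 : ∀ x e d, ∑ y, PY y x e d = 1)
    (hfac : ∀ a e d x y,
      p (a, e, d, x, y) = PA a * PS (e, d) a * PX x a e * PY y x e d) :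
    IT.mi p (fun ω => (ω.1, ω.2.1, ω.2.2.2.1)) (fun ω => (ω.2.2.2.2, ω.2.2.1))
      - IT.condEnt p (fun ω => ω.2.1) (fun ω => ω.1)
    ≤ IT.mi p (fun ω => (ω.1, ω.2.2.2.1)) (fun ω => (ω.2.2.2.2, ω.2.2.1))
      - IT.condMI p (fun ω => ω.2.2.2.1) (fun ω => ω.2.1) (fun ω => ω.1) := by
  have hp : ∀ ω, 0 ≤ p ω := by
    rintro ⟨a, e, d, x, y⟩
    rw [hfac]
    exact mul_nonneg (mul_nonneg (mul_nonneg (hPA0 a) (hPS0 (e, d) a)) (hPX0 x a e))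
      (hPY0 y x e d)
  -- equivalences for relabeling
  let e1 : (Xt × Et) × At ≃ At × Et × Xt :=
    ⟨fun q => (q.2, q.1.2, q.1.1), fun q => ((q.2.2, q.2.1), q.1),
      fun q => rfl, fun q => rfl⟩
  let e2 : Xt × At ≃ At × Xt := Equiv.prodComm Xt At
  let e3 : ((At × Xt) × (Yt × Dt)) × Et ≃ (At × Et × Xt) × (Yt × Dt) :=
    ⟨fun q => ((q.1.1.1, q.2, q.1.1.2), q.1.2), fun q => (((q.1.1, q.1.2.2), q.2), q.1.2.1),
      fun q => rfl, fun q => rfl⟩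
  have h1 := ent_le_pair' hp
    (fun ω : At × Et × Dt × Xt × Yt => ((ω.1, ω.2.2.2.1), (ω.2.2.2.2, ω.2.2.1)))
    (fun ω => ω.2.1)
  have h2 : IT.ent p (fun ω : At × Et × Dt × Xt × Yt =>
        ((ω.1, ω.2.1, ω.2.2.2.1), (ω.2.2.2.2, ω.2.2.1)))
      = IT.ent p (fun ω => (((ω.1, ω.2.2.2.1), (ω.2.2.2.2, ω.2.2.1)), ω.2.1)) :=
    ent_comp_equiv' p e3 (fun ω => (((ω.1, ω.2.2.2.1), (ω.2.2.2.2, ω.2.2.1)), ω.2.1))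
  have h3 : IT.ent p (fun ω : At × Et × Dt × Xt × Yt => (ω.1, ω.2.1, ω.2.2.2.1))
      = IT.ent p (fun ω => ((ω.2.2.2.1, ω.2.1), ω.1)) :=
    ent_comp_equiv' p e1 (fun ω => ((ω.2.2.2.1, ω.2.1), ω.1))
  have h4 : IT.ent p (fun ω : At × Et × Dt × Xt × Yt => (ω.1, ω.2.2.2.1))
      = IT.ent p (fun ω => (ω.2.2.2.1, ω.1)) :=
    ent_comp_equiv' p e2 (fun ω => (ω.2.2.2.1, ω.1))
  simp only [IT.mi, IT.condEnt, IT.condMI] at *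
  linarith


end Channel
end
end

section
/- Let 𝓡 = { (R, R̃) ∈ ℝ² : 0 ≤ R ≤ I(A,X; Y,S_d) − I(X; S_e | A) and R̃ ≤ I(X; Y,S_d | A) − I(X; S_e | A) for some P_A, P_{X|A,S_e} } where the joint distribution is P_A·P_{S_e,S_d|A}·P_{X|A,S_e}·P_{Y|X,S_e,S_d} with the channels P_{S_e,S_d|A} and P_{Y|X,S_e,S_d} fixed. Then 𝓡 is a convex subset of ℝ². -/
open Finset
noncomputable section
set_option linter.unusedSectionVars false
set_option maxHeartbeats 2000000

namespace ITAux
open IT Real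
set_option linter.unusedSectionVars false
variable {Ω : Type} [Fintype Ω]
variable {α β γ : Type} [Fintype α] [DecidableEq α] [Fintype β] [DecidableEq β]
  [Fintype γ] [DecidableEq γ]

lemma marg_nonneg {p : Ω → ℝ} (hp : ∀ ω, 0 ≤ p ω) (X : Ω → α) (a : α) :
    0 ≤ marg p X a := by
  apply Finset.sum_nonneg
  intro ω _
  split
  · exact hp ω
  · exact le_rfl

lemma sum_marg (p : Ω → ℝ) (X : Ω → α) : ∑ a, marg p X a = ∑ ω, p ω := by
  unfold marg
  rw [Finset.sum_comm]
  exact Finset.sum_congr rfl fun ω _ => by simp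

lemma ent_comp {δ : Type} [Fintype δ] [DecidableEq δ] (p : Ω → ℝ)
    {e : α → δ} (he : Function.Injective e) (T : Ω → α) :
    ent p (fun ω => e (T ω)) = ent p T := by
  unfold ent
  rw [← Finset.sum_subset (Finset.subset_univ ((Finset.univ : Finset α).image e))
    (fun d _ hd => by
      have hm : marg p (fun ω => e (T ω)) d = 0 := by
        unfold marg
        apply Finset.sum_eq_zero
        intro ω _
        have hne : e (T ω) ≠ d := fun h => hd (Finset.mem_image.2 ⟨T ω, Finset.mem_univ _, h⟩)
        simp [hne]
      simp [hm])]
  rw [Finset.sum_image (fun a _ b _ h => he h)]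
  apply Finset.sum_congr rfl
  intro a _
  congr 1
  unfold marg
  exact Finset.sum_congr rfl fun ω _ => by simp [he.eq_iff]

lemma ent_congr {Ω' : Type} [Fintype Ω'] {p : Ω → ℝ} {q : Ω' → ℝ} {X : Ω → α} {Y : Ω' → α}
    (h : ∀ a, marg p X a = marg q Y a) : ent p X = ent q Y := by
  unfold ent; exact Finset.sum_congr rfl fun a _ => by rw [h a]

lemma sum_comm3 {f : α → β → Ω → ℝ} :
    ∑ x, ∑ y, ∑ ω, f x y ω = ∑ ω, ∑ x, ∑ y, f x y ω := by
  rw [show (∑ x, ∑ y, ∑ ω, f x y ω) = ∑ x, ∑ ω, ∑ y, f x y ω from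
    Finset.sum_congr rfl fun x _ => Finset.sum_comm]
  exact Finset.sum_comm

lemma margXZ (p : Ω → ℝ) (X : Ω → α) (Y : Ω → β) (Z : Ω → γ) (x : α) (z : γ) :
    marg p (fun ω => (X ω, Z ω)) (x, z)
      = ∑ y, marg p (fun ω => (X ω, Y ω, Z ω)) (x, y, z) := by
  unfold marg
  rw [Finset.sum_comm]
  apply Finset.sum_congr rfl
  intro ω _
  by_cases h1 : X ω = x <;> by_cases h3 : Z ω = z <;>
    simp [h1, h3, Prod.mk.injEq]

lemma margYZ (p : Ω → ℝ) (X : Ω → α) (Y : Ω → β) (Z : Ω → γ) (y : β) (z : γ) :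
    marg p (fun ω => (Y ω, Z ω)) (y, z)
      = ∑ x, marg p (fun ω => (X ω, Y ω, Z ω)) (x, y, z) := by
  unfold marg
  rw [Finset.sum_comm]
  apply Finset.sum_congr rfl
  intro ω _
  by_cases h2 : Y ω = y <;> by_cases h3 : Z ω = z <;>
    simp [h2, h3, Prod.mk.injEq]

lemma margZ3 (p : Ω → ℝ) (X : Ω → α) (Y : Ω → β) (Z : Ω → γ) (z : γ) :
    marg p Z z = ∑ x, ∑ y, marg p (fun ω => (X ω, Y ω, Z ω)) (x, y, z) := by
  unfold marg
  rw [sum_comm3]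
  apply Finset.sum_congr rfl
  intro ω _
  by_cases h3 : Z ω = z <;> simp [h3, Prod.mk.injEq, ite_and]

lemma diff_eq (p : Ω → ℝ) (X : Ω → α) (Y : Ω → β) (Z : Ω → γ) :
    ent p (fun ω => (X ω, Z ω)) + ent p (fun ω => (Y ω, Z ω))
      - ent p (fun ω => (X ω, Y ω, Z ω)) - ent p Z
    = ∑ x, ∑ y, ∑ z, (marg p (fun ω => (X ω, Y ω, Z ω)) (x, y, z)) *
        (Real.log (marg p (fun ω => (X ω, Y ω, Z ω)) (x, y, z))
          + Real.log (marg p Z z)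
          - Real.log (marg p (fun ω => (X ω, Z ω)) (x, z))
          - Real.log (marg p (fun ω => (Y ω, Z ω)) (y, z))) := by
  have eXZ : ent p (fun ω => (X ω, Z ω))
      = ∑ x, ∑ y, ∑ z, -(marg p (fun ω => (X ω, Y ω, Z ω)) (x, y, z)
          * Real.log (marg p (fun ω => (X ω, Z ω)) (x, z))) := by
    unfold ent
    rw [Fintype.sum_prod_type]
    apply Finset.sum_congr rfl
    intro x _
    rw [Finset.sum_comm]
    apply Finset.sum_congr rfl
    intro z _
    rw [Real.negMulLog, margXZ p X Y Z x z, neg_mul, Finset.sum_mul,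
      ← Finset.sum_neg_distrib]
  have eYZ : ent p (fun ω => (Y ω, Z ω))
      = ∑ x, ∑ y, ∑ z, -(marg p (fun ω => (X ω, Y ω, Z ω)) (x, y, z)
          * Real.log (marg p (fun ω => (Y ω, Z ω)) (y, z))) := by
    rw [← sum_comm3]
    unfold ent
    rw [Fintype.sum_prod_type]
    apply Finset.sum_congr rfl
    intro y _
    apply Finset.sum_congr rfl
    intro z _
    rw [Real.negMulLog, margYZ p X Y Z y z, neg_mul, Finset.sum_mul,
      ← Finset.sum_neg_distrib]
  have eXYZ : ent p (fun ω => (X ω, Y ω, Z ω))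
      = ∑ x, ∑ y, ∑ z, -(marg p (fun ω => (X ω, Y ω, Z ω)) (x, y, z)
          * Real.log (marg p (fun ω => (X ω, Y ω, Z ω)) (x, y, z))) := by
    unfold ent
    rw [Fintype.sum_prod_type]
    apply Finset.sum_congr rfl
    intro x _
    rw [Fintype.sum_prod_type]
    apply Finset.sum_congr rfl
    intro y _
    apply Finset.sum_congr rfl
    intro z _
    rw [Real.negMulLog, neg_mul]
  have eZ : ent p Z
      = ∑ x, ∑ y, ∑ z, -(marg p (fun ω => (X ω, Y ω, Z ω)) (x, y, z)
          * Real.log (marg p Z z)) := by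
    rw [← sum_comm3, ← sum_comm3]
    unfold ent
    apply Finset.sum_congr rfl
    intro z _
    rw [Real.negMulLog, margZ3 p X Y Z z, neg_mul, Finset.sum_mul,
      ← Finset.sum_neg_distrib]
    apply Finset.sum_congr rfl
    intro x _
    rw [Finset.sum_mul, ← Finset.sum_neg_distrib]
  rw [eXZ, eYZ, eXYZ, eZ,
    ← Finset.sum_add_distrib, ← Finset.sum_sub_distrib, ← Finset.sum_sub_distrib]
  apply Finset.sum_congr rfl
  intro x _
  rw [← Finset.sum_add_distrib, ← Finset.sum_sub_distrib, ← Finset.sum_sub_distrib]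
  apply Finset.sum_congr rfl
  intro y _
  rw [← Finset.sum_add_distrib, ← Finset.sum_sub_distrib, ← Finset.sum_sub_distrib]
  apply Finset.sum_congr rfl
  intro z _
  ring

theorem core_nonneg (p : Ω → ℝ) (hp0 : ∀ ω, 0 ≤ p ω) (hp1 : ∑ ω, p ω = 1)
    (X : Ω → α) (Y : Ω → β) (Z : Ω → γ) :
    ent p (fun ω => (X ω, Y ω, Z ω)) + ent p Z
      ≤ ent p (fun ω => (X ω, Z ω)) + ent p (fun ω => (Y ω, Z ω)) := by
  have key := diff_eq p X Y Z
  set m : α → β → γ → ℝ := fun x y z => marg p (fun ω => (X ω, Y ω, Z ω)) (x, y, z)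
    with hmdef
  set mXZ : α → γ → ℝ := fun x z => marg p (fun ω => (X ω, Z ω)) (x, z) with hXZdef
  set mYZ : β → γ → ℝ := fun y z => marg p (fun ω => (Y ω, Z ω)) (y, z) with hYZdef
  set mZ : γ → ℝ := fun z => marg p Z z with hZdef
  have hm0 : ∀ x y z, 0 ≤ m x y z := fun x y z => marg_nonneg hp0 _ _
  have hXZ0 : ∀ x z, 0 ≤ mXZ x z := fun x z => marg_nonneg hp0 _ _
  have hYZ0 : ∀ y z, 0 ≤ mYZ y z := fun y z => marg_nonneg hp0 _ _
  have hZ0 : ∀ z, 0 ≤ mZ z := fun z => marg_nonneg hp0 _ _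
  have hXZm : ∀ x z, mXZ x z = ∑ y, m x y z := fun x z => margXZ p X Y Z x z
  have hYZm : ∀ y z, mYZ y z = ∑ x, m x y z := fun y z => margYZ p X Y Z y z
  have hZm : ∀ z, mZ z = ∑ x, ∑ y, m x y z := fun z => margZ3 p X Y Z z
  have hZXZ : ∀ z, mZ z = ∑ x, mXZ x z := fun z => by
    rw [hZm z]; exact Finset.sum_congr rfl fun x _ => (hXZm x z).symm
  have hZYZ : ∀ z, mZ z = ∑ y, mYZ y z := fun z => by
    rw [hZm z, Finset.sum_comm]
    exact Finset.sum_congr rfl fun y _ => (hYZm y z).symm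
  set r : α → β → γ → ℝ := fun x y z =>
    if mZ z = 0 then 0 else mXZ x z * mYZ y z / mZ z with hrdef
  have hterm : ∀ x y z,
      m x y z - r x y z
        ≤ m x y z * (Real.log (m x y z) + Real.log (mZ z)
            - Real.log (mXZ x z) - Real.log (mYZ y z)) := by
    intro x y z
    by_cases h0 : m x y z = 0
    · have hr0 : 0 ≤ r x y z := by
        rw [hrdef]
        dsimp only
        split
        · exact le_rfl
        · exact div_nonneg (mul_nonneg (hXZ0 x z) (hYZ0 y z)) (hZ0 z)
      rw [h0]
      simpa using hr0
    · have hmpos : 0 < m x y z := lt_of_le_of_ne (hm0 x y z) (Ne.symm h0)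
      have hXZpos : 0 < mXZ x z := by
        refine lt_of_lt_of_le hmpos ?_
        rw [hXZm x z]
        exact Finset.single_le_sum (f := fun y' => m x y' z)
          (fun i _ => hm0 x i z) (Finset.mem_univ y)
      have hYZpos : 0 < mYZ y z := by
        refine lt_of_lt_of_le hmpos ?_
        rw [hYZm y z]
        exact Finset.single_le_sum (f := fun x' => m x' y z)
          (fun i _ => hm0 i y z) (Finset.mem_univ x)
      have hZpos : 0 < mZ z := by
        refine lt_of_lt_of_le hXZpos ?_
        rw [hZXZ z]
        exact Finset.single_le_sum (f := fun x' => mXZ x' z)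
          (fun i _ => hXZ0 i z) (Finset.mem_univ x)
      have hrval : r x y z = mXZ x z * mYZ y z / mZ z := by
        rw [hrdef]; dsimp only; rw [if_neg (ne_of_gt hZpos)]
      have htpos : 0 < mXZ x z * mYZ y z / (m x y z * mZ z) :=
        div_pos (mul_pos hXZpos hYZpos) (mul_pos hmpos hZpos)
      have hlog := Real.log_le_sub_one_of_pos htpos
      have hlogeq : Real.log (mXZ x z * mYZ y z / (m x y z * mZ z))
          = Real.log (mXZ x z) + Real.log (mYZ y z)
            - Real.log (m x y z) - Real.log (mZ z) := by
        rw [Real.log_div (ne_of_gt (mul_pos hXZpos hYZpos))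
            (ne_of_gt (mul_pos hmpos hZpos)),
          Real.log_mul (ne_of_gt hXZpos) (ne_of_gt hYZpos),
          Real.log_mul (ne_of_gt hmpos) (ne_of_gt hZpos)]
        ring
      rw [hlogeq] at hlog
      have hmt : m x y z * (mXZ x z * mYZ y z / (m x y z * mZ z))
          = mXZ x z * mYZ y z / mZ z := by
        field_simp
      have hmul := mul_le_mul_of_nonneg_left hlog (le_of_lt hmpos)
      rw [hrval]
      nlinarith [hmul, hmt]
  have hsum_m : ∑ x, ∑ y, ∑ z, m x y z = 1 := by
    have h := sum_marg p (fun ω => (X ω, Y ω, Z ω))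
    rw [hp1] at h
    rw [← h, Fintype.sum_prod_type]
    exact Finset.sum_congr rfl fun x _ => by rw [Fintype.sum_prod_type]
  have hsum_r : ∑ x, ∑ y, ∑ z, r x y z ≤ 1 := by
    have hzsum : ∑ z, mZ z = 1 := by
      have h := sum_marg p Z
      rw [hp1] at h
      exact h
    rw [sum_comm3]
    have hper : ∀ z, ∑ x, ∑ y, r x y z ≤ mZ z := by
      intro z
      by_cases hz : mZ z = 0
      · have hzero : ∀ x y, r x y z = 0 := fun x y => by
          rw [hrdef]; dsimp only; rw [if_pos hz]
        rw [Finset.sum_eq_zero (fun x _ => Finset.sum_eq_zero (fun y _ => hzero x y))]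
        exact hZ0 z
      · have hval : ∑ x, ∑ y, r x y z = (∑ x, mXZ x z) * (∑ y, mYZ y z) / mZ z := by
          rw [Finset.sum_mul, Finset.sum_div]
          apply Finset.sum_congr rfl
          intro x _
          rw [Finset.mul_sum, Finset.sum_div]
          apply Finset.sum_congr rfl
          intro y _
          rw [hrdef]; dsimp only; rw [if_neg hz]
        rw [hval, ← hZXZ z, ← hZYZ z, mul_div_assoc, div_self hz, mul_one]
    calc ∑ z, ∑ x, ∑ y, r x y z ≤ ∑ z, mZ z := Finset.sum_le_sum fun z _ => hper z
      _ = 1 := hzsum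
  have h1 : ∑ x, ∑ y, ∑ z, (m x y z - r x y z)
      ≤ ∑ x, ∑ y, ∑ z, m x y z *
        (Real.log (m x y z) + Real.log (mZ z)
          - Real.log (mXZ x z) - Real.log (mYZ y z)) :=
    Finset.sum_le_sum fun x _ => Finset.sum_le_sum fun y _ =>
      Finset.sum_le_sum fun z _ => hterm x y z
  have h2 : ∑ x, ∑ y, ∑ z, (m x y z - r x y z)
      = (∑ x, ∑ y, ∑ z, m x y z) - ∑ x, ∑ y, ∑ z, r x y z := by
    simp [Finset.sum_sub_distrib]
  linarith [key, h1, h2, hsum_m, hsum_r]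

theorem core_eq (p : Ω → ℝ) (hp0 : ∀ ω, 0 ≤ p ω)
    (X : Ω → α) (Y : Ω → β) (Z : Ω → γ) (hCI : CondIndep p X Y Z) :
    ent p (fun ω => (X ω, Z ω)) + ent p (fun ω => (Y ω, Z ω))
      = ent p (fun ω => (X ω, Y ω, Z ω)) + ent p Z := by
  have key := diff_eq p X Y Z
  have hzero : ∑ x, ∑ y, ∑ z, (marg p (fun ω => (X ω, Y ω, Z ω)) (x, y, z)) *
      (Real.log (marg p (fun ω => (X ω, Y ω, Z ω)) (x, y, z))
        + Real.log (marg p Z z)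
        - Real.log (marg p (fun ω => (X ω, Z ω)) (x, z))
        - Real.log (marg p (fun ω => (Y ω, Z ω)) (y, z))) = 0 := by
    apply Finset.sum_eq_zero
    intro x _
    apply Finset.sum_eq_zero
    intro y _
    apply Finset.sum_eq_zero
    intro z _
    by_cases h0 : marg p (fun ω => (X ω, Y ω, Z ω)) (x, y, z) = 0
    · rw [h0, zero_mul]
    · have hmpos : 0 < marg p (fun ω => (X ω, Y ω, Z ω)) (x, y, z) :=
        lt_of_le_of_ne (marg_nonneg hp0 _ _) (Ne.symm h0)
      have hXZpos : 0 < marg p (fun ω => (X ω, Z ω)) (x, z) := by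
        refine lt_of_lt_of_le hmpos ?_
        rw [margXZ p X Y Z x z]
        exact Finset.single_le_sum (f := fun y' => marg p (fun ω => (X ω, Y ω, Z ω)) (x, y', z))
          (fun i _ => marg_nonneg hp0 _ _) (Finset.mem_univ y)
      have hYZpos : 0 < marg p (fun ω => (Y ω, Z ω)) (y, z) := by
        refine lt_of_lt_of_le hmpos ?_
        rw [margYZ p X Y Z y z]
        exact Finset.single_le_sum (f := fun x' => marg p (fun ω => (X ω, Y ω, Z ω)) (x', y, z))
          (fun i _ => marg_nonneg hp0 _ _) (Finset.mem_univ x)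
      have hZpos : 0 < marg p Z z := by
        refine lt_of_lt_of_le hmpos ?_
        rw [margZ3 p X Y Z z]
        calc marg p (fun ω => (X ω, Y ω, Z ω)) (x, y, z)
            ≤ ∑ y', marg p (fun ω => (X ω, Y ω, Z ω)) (x, y', z) :=
              Finset.single_le_sum (f := fun y' => marg p (fun ω => (X ω, Y ω, Z ω)) (x, y', z))
                (fun i _ => marg_nonneg hp0 _ _) (Finset.mem_univ y)
          _ ≤ ∑ x', ∑ y', marg p (fun ω => (X ω, Y ω, Z ω)) (x', y', z) :=
              Finset.single_le_sum
                (f := fun x' => ∑ y', marg p (fun ω => (X ω, Y ω, Z ω)) (x', y', z))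
                (fun i _ => Finset.sum_nonneg fun j _ => marg_nonneg hp0 _ _)
                (Finset.mem_univ x)
      have hbr : Real.log (marg p (fun ω => (X ω, Y ω, Z ω)) (x, y, z))
          + Real.log (marg p Z z)
          - Real.log (marg p (fun ω => (X ω, Z ω)) (x, z))
          - Real.log (marg p (fun ω => (Y ω, Z ω)) (y, z)) = 0 := by
        rw [← Real.log_mul (ne_of_gt hmpos) (ne_of_gt hZpos), ← hCI x y z,
          Real.log_mul (ne_of_gt hXZpos) (ne_of_gt hYZpos)]
        ring
      rw [hbr, mul_zero]
  linarith [key, hzero]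

end ITAux

namespace Mix
open IT Real ITAux
set_option linter.unusedSectionVars false
variable {Ω : Type} [Fintype Ω]
variable {α : Type} [Fintype α] [DecidableEq α]
variable (p₁ p₂ : Ω → ℝ) (l mυ : ℝ)

def pmixQ (p₁ p₂ : Ω → ℝ) (l mυ : ℝ) : Bool × Ω → ℝ :=
  fun bω => if bω.1 then l * p₁ bω.2 else mυ * p₂ bω.2

lemma marg_mixQ_snd (V : Ω → α) (a : α) :
    marg (pmixQ p₁ p₂ l mυ) (fun ω' => V ω'.2) a
      = l * marg p₁ V a + mυ * marg p₂ V a := by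
  unfold marg pmixQ
  rw [Fintype.sum_prod_type, Fintype.sum_bool]
  simp only [if_true, if_false]
  rw [Finset.mul_sum, Finset.mul_sum]
  congr 1 <;> exact Finset.sum_congr rfl fun ω _ => by
    by_cases h : V ω = a <;> simp [h]

lemma marg_mix (V : Ω → α) (a : α) :
    marg (fun ω => l * p₁ ω + mυ * p₂ ω) V a
      = l * marg p₁ V a + mυ * marg p₂ V a := by
  unfold marg
  rw [Finset.mul_sum, Finset.mul_sum, ← Finset.sum_add_distrib]
  exact Finset.sum_congr rfl fun ω _ => by
    by_cases h : V ω = a <;> simp [h]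

lemma ent_mixQ_snd (V : Ω → α) :
    ent (pmixQ p₁ p₂ l mυ) (fun ω' => V ω'.2)
      = ent (fun ω => l * p₁ ω + mυ * p₂ ω) V :=
  ent_congr fun a => by rw [marg_mixQ_snd, marg_mix]

lemma marg_mixQ_pairQ (V : Ω → α) (a : α) (q : Bool) :
    marg (pmixQ p₁ p₂ l mυ) (fun ω' => (V ω'.2, ω'.1)) (a, q)
      = if q then l * marg p₁ V a else mυ * marg p₂ V a := by
  unfold marg pmixQ
  rw [Fintype.sum_prod_type, Fintype.sum_bool]
  cases q <;> simp [Prod.mk.injEq, Finset.mul_sum]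

lemma marg_mixQ_Qfst (W : Ω → α) (q : Bool) (v : α) :
    marg (pmixQ p₁ p₂ l mυ) (fun ω' => (ω'.1, W ω'.2)) (q, v)
      = if q then l * marg p₁ W v else mυ * marg p₂ W v := by
  unfold marg pmixQ
  rw [Fintype.sum_prod_type, Fintype.sum_bool]
  cases q <;> simp [Prod.mk.injEq, Finset.mul_sum]

lemma ent_mixQ_pairQ (hs1 : ∑ ω, p₁ ω = 1) (hs2 : ∑ ω, p₂ ω = 1) (V : Ω → α) :
    ent (pmixQ p₁ p₂ l mυ) (fun ω' => (V ω'.2, ω'.1))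
      = l * ent p₁ V + mυ * ent p₂ V + (Real.negMulLog l + Real.negMulLog mυ) := by
  unfold ent
  rw [Fintype.sum_prod_type]
  have hrow : ∀ a, (∑ q, Real.negMulLog
        (marg (pmixQ p₁ p₂ l mυ) (fun ω' => (V ω'.2, ω'.1)) (a, q)))
      = (marg p₁ V a * Real.negMulLog l + l * Real.negMulLog (marg p₁ V a))
        + (marg p₂ V a * Real.negMulLog mυ + mυ * Real.negMulLog (marg p₂ V a)) := by
    intro a
    rw [Fintype.sum_bool, marg_mixQ_pairQ, marg_mixQ_pairQ]
    simp only [if_true, Bool.false_eq_true, if_false]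
    rw [Real.negMulLog_mul, Real.negMulLog_mul]
    try ring
  rw [Finset.sum_congr rfl fun a _ => hrow a]
  simp only [Finset.sum_add_distrib, ← Finset.sum_mul, ← Finset.mul_sum]
  rw [sum_marg p₁ V, sum_marg p₂ V, hs1, hs2]
  ring

end Mix

namespace Mix
open IT Real ITAux
set_option linter.unusedSectionVars false
variable {Ω : Type} [Fintype Ω] (p₁ p₂ : Ω → ℝ) (l mυ : ℝ)

lemma sum_pmixQ : ∑ ω', pmixQ p₁ p₂ l mυ ω' = l * ∑ ω, p₁ ω + mυ * ∑ ω, p₂ ω := by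
  unfold pmixQ
  rw [Fintype.sum_prod_type, Fintype.sum_bool]
  simp [Finset.mul_sum]

lemma marg_Q (q : Bool) : marg (pmixQ p₁ p₂ l mυ) (fun ω' => ω'.1) q
    = if q then l * ∑ ω, p₁ ω else mυ * ∑ ω, p₂ ω := by
  unfold marg pmixQ
  rw [Fintype.sum_prod_type, Fintype.sum_bool]
  cases q <;> simp [Finset.mul_sum]

lemma ent_Q (hs1 : ∑ ω, p₁ ω = 1) (hs2 : ∑ ω, p₂ ω = 1) :
    ent (pmixQ p₁ p₂ l mυ) (fun ω' => ω'.1)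
      = Real.negMulLog l + Real.negMulLog mυ := by
  unfold ent
  rw [Fintype.sum_bool]
  rw [marg_Q, marg_Q, hs1, hs2]
  simp

lemma ent_unit (p : Ω → ℝ) : ent p (fun _ => ()) = Real.negMulLog (∑ ω, p ω) := by
  unfold ent marg
  simp

end Mix

section Region
variable {At Et Dt Xt Yt : Type}
  [Fintype At] [DecidableEq At] [Fintype Et] [DecidableEq Et]
  [Fintype Dt] [DecidableEq Dt] [Fintype Xt] [DecidableEq Xt]
  [Fintype Yt] [DecidableEq Yt]

/-- Joint law `P_A · P_{S_e,S_d|A} · P_{X|A,S_e} · P_{Y|X,S_e,S_d}` on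
`(a, s_e, s_d, x, y)`. -/
def jointCh (PS : Et × Dt → At → ℝ) (PY : Yt → Xt → Et → Dt → ℝ)
    (PA : At → ℝ) (PXk : Xt → At → Et → ℝ) : At × Et × Dt × Xt × Yt → ℝ :=
  fun ω => PA ω.1 * PS (ω.2.1, ω.2.2.1) ω.1 * PXk ω.2.2.2.1 ω.1 ω.2.1 *
    PY ω.2.2.2.2 ω.2.2.2.1 ω.2.1 ω.2.2.1


open IT Real ITAux Mix

section MargAux
variable (PS : Et × Dt → At → ℝ) (PY : Yt → Xt → Et → Dt → ℝ)
  (PA : At → ℝ) (PXk : Xt → At → Et → ℝ)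

lemma margYDAEX (y : Yt) (d : Dt) (a : At) (e : Et) (x : Xt) :
    marg (jointCh PS PY PA PXk)
      (fun ω => ((ω.2.2.2.2, ω.2.2.1), (ω.1, ω.2.1, ω.2.2.2.1))) ((y, d), (a, e, x))
    = PA a * PS (e, d) a * PXk x a e * PY y x e d := by
  unfold marg jointCh
  simp [Fintype.sum_prod_type, Prod.mk.injEq, ite_and]

lemma margAEX (hPY1 : ∀ x e d, ∑ y, PY y x e d = 1) (a : At) (e : Et) (x : Xt) :
    marg (jointCh PS PY PA PXk) (fun ω => (ω.1, ω.2.1, ω.2.2.2.1)) (a, e, x)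
    = PA a * (∑ d, PS (e, d) a) * PXk x a e := by
  unfold marg jointCh
  simp only [Fintype.sum_prod_type, Prod.mk.injEq, ite_and]
  simp [Finset.sum_ite_eq', Finset.sum_ite_eq]
  rw [show (∑ d : Dt, ∑ y : Yt, PA a * PS (e, d) a * PXk x a e * PY y x e d)
      = ∑ d : Dt, PA a * PS (e, d) a * PXk x a e from
    Finset.sum_congr rfl fun d _ => by rw [← Finset.mul_sum, hPY1, mul_one]]
  rw [← Finset.sum_mul, ← Finset.mul_sum]
  try ring

lemma margEA (hPXk1 : ∀ a e, ∑ x, PXk x a e = 1)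
    (hPY1 : ∀ x e d, ∑ y, PY y x e d = 1) (e : Et) (a : At) :
    marg (jointCh PS PY PA PXk) (fun ω => (ω.2.1, ω.1)) (e, a)
    = PA a * ∑ d, PS (e, d) a := by
  unfold marg jointCh
  simp only [Fintype.sum_prod_type, Prod.mk.injEq, ite_and]
  simp [Finset.sum_ite_eq', Finset.sum_ite_eq]
  rw [show (∑ d : Dt, ∑ x : Xt, ∑ y : Yt, PA a * PS (e, d) a * PXk x a e * PY y x e d)
      = ∑ d : Dt, ∑ x : Xt, PA a * PS (e, d) a * PXk x a e from
    Finset.sum_congr rfl fun d _ => Finset.sum_congr rfl fun x _ => by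
      rw [← Finset.mul_sum, hPY1, mul_one]]
  rw [show (∑ d : Dt, ∑ x : Xt, PA a * PS (e, d) a * PXk x a e)
      = ∑ d : Dt, PA a * PS (e, d) a from
    Finset.sum_congr rfl fun d _ => by rw [← Finset.mul_sum, hPXk1, mul_one]]
  rw [← Finset.mul_sum]

lemma margA (hPS1 : ∀ a, ∑ s, PS s a = 1) (hPXk1 : ∀ a e, ∑ x, PXk x a e = 1)
    (hPY1 : ∀ x e d, ∑ y, PY y x e d = 1) (a : At) :
    marg (jointCh PS PY PA PXk) (fun ω => ω.1) a = PA a := by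
  unfold marg jointCh
  simp only [Fintype.sum_prod_type, Prod.mk.injEq, ite_and]
  simp [Finset.sum_ite_eq', Finset.sum_ite_eq]
  rw [show (∑ e : Et, ∑ d : Dt, ∑ x : Xt, ∑ y : Yt,
        PA a * PS (e, d) a * PXk x a e * PY y x e d)
      = ∑ e : Et, ∑ d : Dt, ∑ x : Xt, PA a * PS (e, d) a * PXk x a e from
    Finset.sum_congr rfl fun e _ => Finset.sum_congr rfl fun d _ =>
      Finset.sum_congr rfl fun x _ => by rw [← Finset.mul_sum, hPY1, mul_one]]
  rw [show (∑ e : Et, ∑ d : Dt, ∑ x : Xt, PA a * PS (e, d) a * PXk x a e)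
      = ∑ e : Et, ∑ d : Dt, PA a * PS (e, d) a from
    Finset.sum_congr rfl fun e _ => Finset.sum_congr rfl fun d _ => by
      rw [← Finset.mul_sum, hPXk1, mul_one]]
  have hps : ∑ e : Et, ∑ d : Dt, PS (e, d) a = 1 := by
    rw [← hPS1 a]
    exact (Fintype.sum_prod_type (f := fun s : Et × Dt => PS s a)).symm
  rw [show (∑ e : Et, ∑ d : Dt, PA a * PS (e, d) a)
      = PA a * ∑ e : Et, ∑ d : Dt, PS (e, d) a from by
    rw [Finset.mul_sum]
    exact Finset.sum_congr rfl fun e _ => by rw [← Finset.mul_sum]]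
  rw [hps, mul_one]

lemma sum_jointCh (hPS1 : ∀ a, ∑ s, PS s a = 1) (hPA1 : ∑ a, PA a = 1)
    (hPXk1 : ∀ a e, ∑ x, PXk x a e = 1) (hPY1 : ∀ x e d, ∑ y, PY y x e d = 1) :
    ∑ ω, jointCh PS PY PA PXk ω = 1 := by
  rw [← sum_marg (jointCh PS PY PA PXk) (fun ω => ω.1)]
  rw [Finset.sum_congr rfl fun a _ => margA PS PY PA PXk hPS1 hPXk1 hPY1 a]
  exact hPA1

lemma jointCh_nonneg (hPS0 : ∀ s a, 0 ≤ PS s a) (hPY0 : ∀ y x e d, 0 ≤ PY y x e d)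
    (hPA0 : ∀ a, 0 ≤ PA a) (hPXk0 : ∀ x a e, 0 ≤ PXk x a e) (ω : At × Et × Dt × Xt × Yt) :
    0 ≤ jointCh PS PY PA PXk ω :=
  mul_nonneg (mul_nonneg (mul_nonneg (hPA0 _) (hPS0 _ _)) (hPXk0 _ _ _)) (hPY0 _ _ _ _)


end MargAux

section RedAux
variable (p : At × Et × Dt × Xt × Yt → ℝ)

lemma cg1 : ent p (fun ω => ((ω.1, ω.2.2.2.1), (ω.2.2.2.2, ω.2.2.1)))
    = ent p (fun ω => (ω.1, ω.2.2.2.1, ω.2.2.2.2, ω.2.2.1)) :=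
  ent_comp p (e := fun v : At × Xt × Yt × Dt => ((v.1, v.2.1), (v.2.2.1, v.2.2.2)))
    (by rintro ⟨a, x, y, d⟩ ⟨a', x', y', d'⟩ h; simp_all [Prod.mk.injEq])
    (fun ω => (ω.1, ω.2.2.2.1, ω.2.2.2.2, ω.2.2.1))

lemma cg2 : ent p (fun ω => (ω.2.2.2.1, ω.1)) = ent p (fun ω => (ω.1, ω.2.2.2.1)) :=
  ent_comp p (e := fun v : At × Xt => (v.2, v.1))
    (by rintro ⟨a, x⟩ ⟨a', x'⟩ h; simp_all [Prod.mk.injEq])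
    (fun ω => (ω.1, ω.2.2.2.1))

lemma cg3 : ent p (fun ω => (ω.2.1, ω.1)) = ent p (fun ω => (ω.1, ω.2.1)) :=
  ent_comp p (e := fun v : At × Et => (v.2, v.1))
    (by rintro ⟨a, e⟩ ⟨a', e'⟩ h; simp_all [Prod.mk.injEq])
    (fun ω => (ω.1, ω.2.1))

lemma cg4 : ent p (fun ω => ((ω.2.2.2.1, ω.2.1), ω.1))
    = ent p (fun ω => (ω.1, ω.2.1, ω.2.2.2.1)) :=
  ent_comp p (e := fun v : At × Et × Xt => ((v.2.2, v.2.1), v.1))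
    (by rintro ⟨a, e, x⟩ ⟨a', e', x'⟩ h; simp_all [Prod.mk.injEq])
    (fun ω => (ω.1, ω.2.1, ω.2.2.2.1))

lemma cg5 : ent p (fun ω => ((ω.2.2.2.2, ω.2.2.1), ω.1))
    = ent p (fun ω => (ω.1, ω.2.2.1, ω.2.2.2.2)) :=
  ent_comp p (e := fun v : At × Dt × Yt => ((v.2.2, v.2.1), v.1))
    (by rintro ⟨a, d, y⟩ ⟨a', d', y'⟩ h; simp_all [Prod.mk.injEq])
    (fun ω => (ω.1, ω.2.2.1, ω.2.2.2.2))

lemma cg6 : ent p (fun ω => ((ω.2.2.2.1, ω.2.2.2.2, ω.2.2.1), ω.1))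
    = ent p (fun ω => (ω.1, ω.2.2.1, ω.2.2.2.1, ω.2.2.2.2)) :=
  ent_comp p (e := fun v : At × Dt × Xt × Yt => ((v.2.2.1, v.2.2.2, v.2.1), v.1))
    (by rintro ⟨a, d, x, y⟩ ⟨a', d', x', y'⟩ h; simp_all [Prod.mk.injEq])
    (fun ω => (ω.1, ω.2.2.1, ω.2.2.2.1, ω.2.2.2.2))

lemma redA : mi p (fun ω => (ω.1, ω.2.2.2.1)) (fun ω => (ω.2.2.2.2, ω.2.2.1))
      - condMI p (fun ω => ω.2.2.2.1) (fun ω => ω.2.1) (fun ω => ω.1)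
    = ent p (fun ω => (ω.2.2.2.2, ω.2.2.1))
      - ent p (fun ω => (ω.1, ω.2.2.2.1, ω.2.2.2.2, ω.2.2.1))
      - ent p (fun ω => (ω.1, ω.2.1))
      + ent p (fun ω => (ω.1, ω.2.1, ω.2.2.2.1))
      + ent p (fun ω => ω.1) := by
  simp only [mi, condMI, condEnt]
  rw [cg1, cg2, cg3, cg4]
  ring

lemma redB : condMI p (fun ω => ω.2.2.2.1) (fun ω => (ω.2.2.2.2, ω.2.2.1)) (fun ω => ω.1)
      - condMI p (fun ω => ω.2.2.2.1) (fun ω => ω.2.1) (fun ω => ω.1)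
    = ent p (fun ω => (ω.1, ω.2.2.1, ω.2.2.2.2))
      - ent p (fun ω => (ω.1, ω.2.2.1, ω.2.2.2.1, ω.2.2.2.2))
      - ent p (fun ω => (ω.1, ω.2.1))
      + ent p (fun ω => (ω.1, ω.2.1, ω.2.2.2.1)) := by
  simp only [mi, condMI, condEnt]
  rw [cg2, cg3, cg4, cg5, cg6]
  ring


end RedAux

section CIAux
variable (PS : Et × Dt → At → ℝ) (PY : Yt → Xt → Et → Dt → ℝ)
  (PA₁ PA₂ : At → ℝ) (PX₁ PX₂ : Xt → At → Et → ℝ) (l mυ : ℝ)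

lemma CI1 (hPS1 : ∀ a, ∑ s, PS s a = 1) (hPY1 : ∀ x e d, ∑ y, PY y x e d = 1)
    (hPX₁1 : ∀ a e, ∑ x, PX₁ x a e = 1) (hPX₂1 : ∀ a e, ∑ x, PX₂ x a e = 1) :
    CondIndep (pmixQ (jointCh PS PY PA₁ PX₁) (jointCh PS PY PA₂ PX₂) l mυ)
      (fun ω' => ω'.1) (fun ω' => ω'.2.2.1) (fun ω' => ω'.2.1) := by
  intro q e a
  set p₁ := jointCh PS PY PA₁ PX₁
  set p₂ := jointCh PS PY PA₂ PX₂
  set p' := pmixQ p₁ p₂ l mυ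
  show marg p' (fun ω' => (ω'.1, ω'.2.1)) (q, a)
      * marg p' (fun ω' => (ω'.2.2.1, ω'.2.1)) (e, a)
    = marg p' (fun ω' => (ω'.1, ω'.2.2.1, ω'.2.1)) (q, e, a)
      * marg p' (fun ω' => ω'.2.1) a
  have h1 : marg p' (fun ω' => (ω'.1, ω'.2.1)) (q, a)
      = if q then l * marg p₁ (fun ω => ω.1) a else mυ * marg p₂ (fun ω => ω.1) a :=
    marg_mixQ_Qfst p₁ p₂ l mυ (fun ω => ω.1) q a
  have h2 : marg p' (fun ω' => (ω'.2.2.1, ω'.2.1)) (e, a)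
      = l * marg p₁ (fun ω => (ω.2.1, ω.1)) (e, a)
        + mυ * marg p₂ (fun ω => (ω.2.1, ω.1)) (e, a) :=
    marg_mixQ_snd p₁ p₂ l mυ (fun ω => (ω.2.1, ω.1)) (e, a)
  have h3 : marg p' (fun ω' => (ω'.1, ω'.2.2.1, ω'.2.1)) (q, e, a)
      = if q then l * marg p₁ (fun ω => (ω.2.1, ω.1)) (e, a)
        else mυ * marg p₂ (fun ω => (ω.2.1, ω.1)) (e, a) :=
    marg_mixQ_Qfst p₁ p₂ l mυ (fun ω => (ω.2.1, ω.1)) q (e, a)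
  have h4 : marg p' (fun ω' => ω'.2.1) a
      = l * marg p₁ (fun ω => ω.1) a + mυ * marg p₂ (fun ω => ω.1) a :=
    marg_mixQ_snd p₁ p₂ l mυ (fun ω => ω.1) a
  rw [h1, h2, h3, h4,
    margA PS PY PA₁ PX₁ hPS1 hPX₁1 hPY1, margA PS PY PA₂ PX₂ hPS1 hPX₂1 hPY1,
    margEA PS PY PA₁ PX₁ hPX₁1 hPY1, margEA PS PY PA₂ PX₂ hPX₂1 hPY1]
  cases q <;> simp only [if_true, Bool.false_eq_true, if_false] <;> ring

lemma CI2 (hPY1 : ∀ x e d, ∑ y, PY y x e d = 1) :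
    CondIndep (pmixQ (jointCh PS PY PA₁ PX₁) (jointCh PS PY PA₂ PX₂) l mυ)
      (fun ω' => ω'.1) (fun ω' => (ω'.2.2.2.2.2, ω'.2.2.2.1))
      (fun ω' => (ω'.2.1, ω'.2.2.1, ω'.2.2.2.2.1)) := by
  rintro q ⟨y, d⟩ ⟨a, e, x⟩
  set p₁ := jointCh PS PY PA₁ PX₁
  set p₂ := jointCh PS PY PA₂ PX₂
  set p' := pmixQ p₁ p₂ l mυ
  show marg p' (fun ω' => (ω'.1, ω'.2.1, ω'.2.2.1, ω'.2.2.2.2.1)) (q, a, e, x)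
      * marg p' (fun ω' => ((ω'.2.2.2.2.2, ω'.2.2.2.1), (ω'.2.1, ω'.2.2.1, ω'.2.2.2.2.1)))
        ((y, d), (a, e, x))
    = marg p' (fun ω' => (ω'.1, (ω'.2.2.2.2.2, ω'.2.2.2.1), (ω'.2.1, ω'.2.2.1, ω'.2.2.2.2.1)))
        (q, (y, d), (a, e, x))
      * marg p' (fun ω' => (ω'.2.1, ω'.2.2.1, ω'.2.2.2.2.1)) (a, e, x)
  have h1 : marg p' (fun ω' => (ω'.1, ω'.2.1, ω'.2.2.1, ω'.2.2.2.2.1)) (q, a, e, x)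
      = if q then l * marg p₁ (fun ω => (ω.1, ω.2.1, ω.2.2.2.1)) (a, e, x)
        else mυ * marg p₂ (fun ω => (ω.1, ω.2.1, ω.2.2.2.1)) (a, e, x) :=
    marg_mixQ_Qfst p₁ p₂ l mυ (fun ω => (ω.1, ω.2.1, ω.2.2.2.1)) q (a, e, x)
  have h2 : marg p' (fun ω' => ((ω'.2.2.2.2.2, ω'.2.2.2.1), (ω'.2.1, ω'.2.2.1, ω'.2.2.2.2.1)))
        ((y, d), (a, e, x))
      = l * marg p₁ (fun ω => ((ω.2.2.2.2, ω.2.2.1), (ω.1, ω.2.1, ω.2.2.2.1))) ((y, d), (a, e, x))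
        + mυ * marg p₂ (fun ω => ((ω.2.2.2.2, ω.2.2.1), (ω.1, ω.2.1, ω.2.2.2.1))) ((y, d), (a, e, x)) :=
    marg_mixQ_snd p₁ p₂ l mυ (fun ω => ((ω.2.2.2.2, ω.2.2.1), (ω.1, ω.2.1, ω.2.2.2.1))) ((y, d), (a, e, x))
  have h3 : marg p' (fun ω' => (ω'.1, (ω'.2.2.2.2.2, ω'.2.2.2.1), (ω'.2.1, ω'.2.2.1, ω'.2.2.2.2.1)))
        (q, (y, d), (a, e, x))
      = if q then l * marg p₁ (fun ω => ((ω.2.2.2.2, ω.2.2.1), (ω.1, ω.2.1, ω.2.2.2.1))) ((y, d), (a, e, x))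
        else mυ * marg p₂ (fun ω => ((ω.2.2.2.2, ω.2.2.1), (ω.1, ω.2.1, ω.2.2.2.1))) ((y, d), (a, e, x)) :=
    marg_mixQ_Qfst p₁ p₂ l mυ (fun ω => ((ω.2.2.2.2, ω.2.2.1), (ω.1, ω.2.1, ω.2.2.2.1))) q ((y, d), (a, e, x))
  have h4 : marg p' (fun ω' => (ω'.2.1, ω'.2.2.1, ω'.2.2.2.2.1)) (a, e, x)
      = l * marg p₁ (fun ω => (ω.1, ω.2.1, ω.2.2.2.1)) (a, e, x)
        + mυ * marg p₂ (fun ω => (ω.1, ω.2.1, ω.2.2.2.1)) (a, e, x) :=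
    marg_mixQ_snd p₁ p₂ l mυ (fun ω => (ω.1, ω.2.1, ω.2.2.2.1)) (a, e, x)
  rw [h1, h2, h3, h4,
    margAEX PS PY PA₁ PX₁ hPY1, margAEX PS PY PA₂ PX₂ hPY1,
    margYDAEX PS PY PA₁ PX₁, margYDAEX PS PY PA₂ PX₂]
  cases q <;> simp only [if_true, Bool.false_eq_true, if_false] <;> ring


end CIAux

/-- the modified region `𝓡` with the dummy variable `R̃` is convex. -/
theorem stmt15 (PS : Et × Dt → At → ℝ) (PY : Yt → Xt → Et → Dt → ℝ)
    (hPS0 : ∀ s a, 0 ≤ PS s a) (hPS1 : ∀ a, ∑ s, PS s a = 1)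
    (hPY0 : ∀ y x e d, 0 ≤ PY y x e d) (hPY1 : ∀ x e d, ∑ y, PY y x e d = 1) :
    Convex ℝ { rp : ℝ × ℝ | ∃ PA : At → ℝ, ∃ PXk : Xt → At → Et → ℝ,
      (∀ a, 0 ≤ PA a) ∧ (∑ a, PA a = 1) ∧
      (∀ x a e, 0 ≤ PXk x a e) ∧ (∀ a e, ∑ x, PXk x a e = 1) ∧
      0 ≤ rp.1 ∧
      rp.1 ≤ IT.mi (jointCh PS PY PA PXk)
               (fun ω => (ω.1, ω.2.2.2.1)) (fun ω => (ω.2.2.2.2, ω.2.2.1))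
             - IT.condMI (jointCh PS PY PA PXk)
               (fun ω => ω.2.2.2.1) (fun ω => ω.2.1) (fun ω => ω.1) ∧
      rp.2 ≤ IT.condMI (jointCh PS PY PA PXk)
               (fun ω => ω.2.2.2.1) (fun ω => (ω.2.2.2.2, ω.2.2.1)) (fun ω => ω.1)
             - IT.condMI (jointCh PS PY PA PXk)
               (fun ω => ω.2.2.2.1) (fun ω => ω.2.1) (fun ω => ω.1) } := by
  rintro ⟨R1, T1⟩ ⟨PA₁, PX₁, hPA₁0, hPA₁1, hPX₁0, hPX₁1, hR1nn, hR1, hT1⟩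
    ⟨R2, T2⟩ ⟨PA₂, PX₂, hPA₂0, hPA₂1, hPX₂0, hPX₂1, hR2nn, hR2, hT2⟩
    l mυ hl hmυ hlm
  classical
  simp only [Set.mem_setOf_eq] at *
  set PA : At → ℝ := fun a => l * PA₁ a + mυ * PA₂ a with hPAdef
  set PXk : Xt → At → Et → ℝ := fun x a e =>
    if PA a = 0 then PX₁ x a e
    else (l * PA₁ a * PX₁ x a e + mυ * PA₂ a * PX₂ x a e) / PA a with hPXdef
  have hPA0 : ∀ a, 0 ≤ PA a := fun a =>
    add_nonneg (mul_nonneg hl (hPA₁0 a)) (mul_nonneg hmυ (hPA₂0 a))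
  have hPA1 : ∑ a, PA a = 1 := by
    rw [hPAdef, Finset.sum_add_distrib, ← Finset.mul_sum, ← Finset.mul_sum,
      hPA₁1, hPA₂1, mul_one, mul_one, hlm]
  have hPXk0 : ∀ x a e, 0 ≤ PXk x a e := by
    intro x a e
    rw [hPXdef]
    dsimp only
    split
    · exact hPX₁0 x a e
    · exact div_nonneg (add_nonneg
        (mul_nonneg (mul_nonneg hl (hPA₁0 a)) (hPX₁0 x a e))
        (mul_nonneg (mul_nonneg hmυ (hPA₂0 a)) (hPX₂0 x a e))) (hPA0 a)
  have hPXk1 : ∀ a e, ∑ x, PXk x a e = 1 := by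
    intro a e
    rw [hPXdef]
    dsimp only
    by_cases hz : PA a = 0
    · simp only [hz, if_pos]
      exact hPX₁1 a e
    · simp only [hz, if_neg, ite_false]
      rw [← Finset.sum_div, Finset.sum_add_distrib, ← Finset.mul_sum, ← Finset.mul_sum,
        hPX₁1, hPX₂1, mul_one, mul_one]
      rw [hPAdef] at hz ⊢
      exact div_self hz
  -- mixture joint distributions
  set p₁ : At × Et × Dt × Xt × Yt → ℝ := jointCh PS PY PA₁ PX₁ with hp₁def
  set p₂ : At × Et × Dt × Xt × Yt → ℝ := jointCh PS PY PA₂ PX₂ with hp₂def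
  set p : At × Et × Dt × Xt × Yt → ℝ := jointCh PS PY PA PXk with hpdef
  set p' : Bool × (At × Et × Dt × Xt × Yt) → ℝ := pmixQ p₁ p₂ l mυ with hp'def
  have hs1 : ∑ ω, p₁ ω = 1 := sum_jointCh PS PY PA₁ PX₁ hPS1 hPA₁1 hPX₁1 hPY1
  have hs2 : ∑ ω, p₂ ω = 1 := sum_jointCh PS PY PA₂ PX₂ hPS1 hPA₂1 hPX₂1 hPY1
  have hp10 : ∀ ω, 0 ≤ p₁ ω := jointCh_nonneg PS PY PA₁ PX₁ hPS0 hPY0 hPA₁0 hPX₁0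
  have hp20 : ∀ ω, 0 ≤ p₂ ω := jointCh_nonneg PS PY PA₂ PX₂ hPS0 hPY0 hPA₂0 hPX₂0
  have hKp : ∀ a x e, PA a * PXk x a e
      = l * PA₁ a * PX₁ x a e + mυ * PA₂ a * PX₂ x a e := by
    intro a x e
    rw [hPXdef]
    dsimp only
    by_cases hz : PA a = 0
    · have hz' : l * PA₁ a + mυ * PA₂ a = 0 := by
        rw [hPAdef] at hz; exact hz
      have h1 : l * PA₁ a = 0 := by
        nlinarith [mul_nonneg hl (hPA₁0 a), mul_nonneg hmυ (hPA₂0 a)]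
      have h2 : mυ * PA₂ a = 0 := by
        nlinarith [mul_nonneg hl (hPA₁0 a), mul_nonneg hmυ (hPA₂0 a)]
      rw [if_pos hz, hz, zero_mul, h1, h2, zero_mul, zero_mul, add_zero]
    · rw [if_neg hz]
      field_simp
  have hpp : p = fun ω => l * p₁ ω + mυ * p₂ ω := by
    funext ω
    rw [hpdef, hp₁def, hp₂def]
    show PA ω.1 * PS (ω.2.1, ω.2.2.1) ω.1 * PXk ω.2.2.2.1 ω.1 ω.2.1 *
        PY ω.2.2.2.2 ω.2.2.2.1 ω.2.1 ω.2.2.1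
      = l * (PA₁ ω.1 * PS (ω.2.1, ω.2.2.1) ω.1 * PX₁ ω.2.2.2.1 ω.1 ω.2.1 *
          PY ω.2.2.2.2 ω.2.2.2.1 ω.2.1 ω.2.2.1)
        + mυ * (PA₂ ω.1 * PS (ω.2.1, ω.2.2.1) ω.1 * PX₂ ω.2.2.2.1 ω.1 ω.2.1 *
          PY ω.2.2.2.2 ω.2.2.2.1 ω.2.1 ω.2.2.1)
    linear_combination (PS (ω.2.1, ω.2.2.1) ω.1 *
      PY ω.2.2.2.2 ω.2.2.2.1 ω.2.1 ω.2.2.1) * hKp ω.1 ω.2.2.2.1 ω.2.1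
  have hp'0 : ∀ ω', 0 ≤ p' ω' := by
    rintro ⟨b, ω⟩
    rw [hp'def]
    unfold pmixQ
    dsimp only
    split
    · exact mul_nonneg hl (hp10 ω)
    · exact mul_nonneg hmυ (hp20 ω)
  have hp'1 : ∑ ω', p' ω' = 1 := by
    rw [hp'def, sum_pmixQ, hs1, hs2, mul_one, mul_one, hlm]
  -- Q-paired entropies
  have hQ_A : ent p' (fun ω' => (ω'.2.1, ω'.1))
      = l * ent p₁ (fun ω => ω.1) + mυ * ent p₂ (fun ω => ω.1)
        + (Real.negMulLog l + Real.negMulLog mυ) :=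
    ent_mixQ_pairQ p₁ p₂ l mυ hs1 hs2 (fun ω => ω.1)
  have hQ_AE : ent p' (fun ω' => ((ω'.2.1, ω'.2.2.1), ω'.1))
      = l * ent p₁ (fun ω => (ω.1, ω.2.1)) + mυ * ent p₂ (fun ω => (ω.1, ω.2.1))
        + (Real.negMulLog l + Real.negMulLog mυ) :=
    ent_mixQ_pairQ p₁ p₂ l mυ hs1 hs2 (fun ω => (ω.1, ω.2.1))
  have hQ_AEX : ent p' (fun ω' => ((ω'.2.1, ω'.2.2.1, ω'.2.2.2.2.1), ω'.1))
      = l * ent p₁ (fun ω => (ω.1, ω.2.1, ω.2.2.2.1))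
        + mυ * ent p₂ (fun ω => (ω.1, ω.2.1, ω.2.2.2.1))
        + (Real.negMulLog l + Real.negMulLog mυ) :=
    ent_mixQ_pairQ p₁ p₂ l mυ hs1 hs2 (fun ω => (ω.1, ω.2.1, ω.2.2.2.1))
  have hQ_YD : ent p' (fun ω' => ((ω'.2.2.2.2.2, ω'.2.2.2.1), ω'.1))
      = l * ent p₁ (fun ω => (ω.2.2.2.2, ω.2.2.1))
        + mυ * ent p₂ (fun ω => (ω.2.2.2.2, ω.2.2.1))
        + (Real.negMulLog l + Real.negMulLog mυ) :=
    ent_mixQ_pairQ p₁ p₂ l mυ hs1 hs2 (fun ω => (ω.2.2.2.2, ω.2.2.1))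
  have hQ_AXYD : ent p' (fun ω' => ((ω'.2.1, ω'.2.2.2.2.1, ω'.2.2.2.2.2, ω'.2.2.2.1), ω'.1))
      = l * ent p₁ (fun ω => (ω.1, ω.2.2.2.1, ω.2.2.2.2, ω.2.2.1))
        + mυ * ent p₂ (fun ω => (ω.1, ω.2.2.2.1, ω.2.2.2.2, ω.2.2.1))
        + (Real.negMulLog l + Real.negMulLog mυ) :=
    ent_mixQ_pairQ p₁ p₂ l mυ hs1 hs2 (fun ω => (ω.1, ω.2.2.2.1, ω.2.2.2.2, ω.2.2.1))
  have hQ_ADY : ent p' (fun ω' => ((ω'.2.1, ω'.2.2.2.1, ω'.2.2.2.2.2), ω'.1))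
      = l * ent p₁ (fun ω => (ω.1, ω.2.2.1, ω.2.2.2.2))
        + mυ * ent p₂ (fun ω => (ω.1, ω.2.2.1, ω.2.2.2.2))
        + (Real.negMulLog l + Real.negMulLog mυ) :=
    ent_mixQ_pairQ p₁ p₂ l mυ hs1 hs2 (fun ω => (ω.1, ω.2.2.1, ω.2.2.2.2))
  have hQ_ADXY : ent p' (fun ω' => ((ω'.2.1, ω'.2.2.2.1, ω'.2.2.2.2.1, ω'.2.2.2.2.2), ω'.1))
      = l * ent p₁ (fun ω => (ω.1, ω.2.2.1, ω.2.2.2.1, ω.2.2.2.2))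
        + mυ * ent p₂ (fun ω => (ω.1, ω.2.2.1, ω.2.2.2.1, ω.2.2.2.2))
        + (Real.negMulLog l + Real.negMulLog mυ) :=
    ent_mixQ_pairQ p₁ p₂ l mυ hs1 hs2 (fun ω => (ω.1, ω.2.2.1, ω.2.2.2.1, ω.2.2.2.2))
  have hQ_F5 : ent p' (fun ω' =>
        ((ω'.2.1, ω'.2.2.1, ω'.2.2.2.1, ω'.2.2.2.2.1, ω'.2.2.2.2.2), ω'.1))
      = l * ent p₁ (fun ω => (ω.1, ω.2.1, ω.2.2.1, ω.2.2.2.1, ω.2.2.2.2))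
        + mυ * ent p₂ (fun ω => (ω.1, ω.2.1, ω.2.2.1, ω.2.2.2.1, ω.2.2.2.2))
        + (Real.negMulLog l + Real.negMulLog mυ) :=
    ent_mixQ_pairQ p₁ p₂ l mυ hs1 hs2 (fun ω => (ω.1, ω.2.1, ω.2.2.1, ω.2.2.2.1, ω.2.2.2.2))
  -- marginal entropies
  have hm_A : ent p' (fun ω' => ω'.2.1) = ent p (fun ω => ω.1) := by
    rw [hpp]; exact ent_mixQ_snd p₁ p₂ l mυ (fun ω => ω.1)
  have hm_AE : ent p' (fun ω' => (ω'.2.1, ω'.2.2.1)) = ent p (fun ω => (ω.1, ω.2.1)) := by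
    rw [hpp]; exact ent_mixQ_snd p₁ p₂ l mυ (fun ω => (ω.1, ω.2.1))
  have hm_AEX : ent p' (fun ω' => (ω'.2.1, ω'.2.2.1, ω'.2.2.2.2.1))
      = ent p (fun ω => (ω.1, ω.2.1, ω.2.2.2.1)) := by
    rw [hpp]; exact ent_mixQ_snd p₁ p₂ l mυ (fun ω => (ω.1, ω.2.1, ω.2.2.2.1))
  have hm_YD : ent p' (fun ω' => (ω'.2.2.2.2.2, ω'.2.2.2.1))
      = ent p (fun ω => (ω.2.2.2.2, ω.2.2.1)) := by
    rw [hpp]; exact ent_mixQ_snd p₁ p₂ l mυ (fun ω => (ω.2.2.2.2, ω.2.2.1))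
  have hm_AXYD : ent p' (fun ω' => (ω'.2.1, ω'.2.2.2.2.1, ω'.2.2.2.2.2, ω'.2.2.2.1))
      = ent p (fun ω => (ω.1, ω.2.2.2.1, ω.2.2.2.2, ω.2.2.1)) := by
    rw [hpp]; exact ent_mixQ_snd p₁ p₂ l mυ (fun ω => (ω.1, ω.2.2.2.1, ω.2.2.2.2, ω.2.2.1))
  have hm_ADY : ent p' (fun ω' => (ω'.2.1, ω'.2.2.2.1, ω'.2.2.2.2.2))
      = ent p (fun ω => (ω.1, ω.2.2.1, ω.2.2.2.2)) := by
    rw [hpp]; exact ent_mixQ_snd p₁ p₂ l mυ (fun ω => (ω.1, ω.2.2.1, ω.2.2.2.2))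
  have hm_ADXY : ent p' (fun ω' => (ω'.2.1, ω'.2.2.2.1, ω'.2.2.2.2.1, ω'.2.2.2.2.2))
      = ent p (fun ω => (ω.1, ω.2.2.1, ω.2.2.2.1, ω.2.2.2.2)) := by
    rw [hpp]; exact ent_mixQ_snd p₁ p₂ l mυ (fun ω => (ω.1, ω.2.2.1, ω.2.2.2.1, ω.2.2.2.2))
  have hm_F5 : ent p' (fun ω' => (ω'.2.1, ω'.2.2.1, ω'.2.2.2.1, ω'.2.2.2.2.1, ω'.2.2.2.2.2))
      = ent p (fun ω => (ω.1, ω.2.1, ω.2.2.1, ω.2.2.2.1, ω.2.2.2.2)) := by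
    rw [hpp]; exact ent_mixQ_snd p₁ p₂ l mυ (fun ω => (ω.1, ω.2.1, ω.2.2.1, ω.2.2.2.1, ω.2.2.2.2))
  have hQv : ent p' (fun ω' => ω'.1) = Real.negMulLog l + Real.negMulLog mυ :=
    ent_Q p₁ p₂ l mυ hs1 hs2
  have hu : ent p' (fun _ => ()) = 0 := by
    rw [ent_unit, hp'1]
    simp [Real.negMulLog]
  -- conversions
  have cvQA : ent p' (fun ω' => (ω'.1, ω'.2.1)) = ent p' (fun ω' => (ω'.2.1, ω'.1)) :=
    ent_comp p' (e := fun v : At × Bool => (v.2, v.1))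
      (by rintro ⟨a, q⟩ ⟨a', q'⟩ h; simp_all [Prod.mk.injEq])
      (fun ω' => (ω'.2.1, ω'.1))
  have cvEA : ent p' (fun ω' => (ω'.2.2.1, ω'.2.1)) = ent p' (fun ω' => (ω'.2.1, ω'.2.2.1)) :=
    ent_comp p' (e := fun v : At × Et => (v.2, v.1))
      (by rintro ⟨a, e⟩ ⟨a', e'⟩ h; simp_all [Prod.mk.injEq])
      (fun ω' => (ω'.2.1, ω'.2.2.1))
  have cvQEA : ent p' (fun ω' => (ω'.1, ω'.2.2.1, ω'.2.1))
      = ent p' (fun ω' => ((ω'.2.1, ω'.2.2.1), ω'.1)) :=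
    ent_comp p' (e := fun v : (At × Et) × Bool => (v.2, v.1.2, v.1.1))
      (by rintro ⟨⟨a, e⟩, q⟩ ⟨⟨a', e'⟩, q'⟩ h; simp_all [Prod.mk.injEq])
      (fun ω' => ((ω'.2.1, ω'.2.2.1), ω'.1))
  have cvQAEX : ent p' (fun ω' => (ω'.1, ω'.2.1, ω'.2.2.1, ω'.2.2.2.2.1))
      = ent p' (fun ω' => ((ω'.2.1, ω'.2.2.1, ω'.2.2.2.2.1), ω'.1)) :=
    ent_comp p' (e := fun v : (At × Et × Xt) × Bool => (v.2, v.1))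
      (by rintro ⟨v, q⟩ ⟨v', q'⟩ h; simp_all [Prod.mk.injEq])
      (fun ω' => ((ω'.2.1, ω'.2.2.1, ω'.2.2.2.2.1), ω'.1))
  have cvYDAEX : ent p' (fun ω' => ((ω'.2.2.2.2.2, ω'.2.2.2.1), ω'.2.1, ω'.2.2.1, ω'.2.2.2.2.1))
      = ent p' (fun ω' => (ω'.2.1, ω'.2.2.1, ω'.2.2.2.1, ω'.2.2.2.2.1, ω'.2.2.2.2.2)) :=
    ent_comp p'
      (e := fun v : At × Et × Dt × Xt × Yt => ((v.2.2.2.2, v.2.2.1), v.1, v.2.1, v.2.2.2.1))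
      (by rintro ⟨a, e, d, x, y⟩ ⟨a', e', d', x', y'⟩ h; simp_all [Prod.mk.injEq])
      (fun ω' => (ω'.2.1, ω'.2.2.1, ω'.2.2.2.1, ω'.2.2.2.2.1, ω'.2.2.2.2.2))
  have cvQYDAEX : ent p'
        (fun ω' => (ω'.1, (ω'.2.2.2.2.2, ω'.2.2.2.1), ω'.2.1, ω'.2.2.1, ω'.2.2.2.2.1))
      = ent p' (fun ω' =>
          ((ω'.2.1, ω'.2.2.1, ω'.2.2.2.1, ω'.2.2.2.2.1, ω'.2.2.2.2.2), ω'.1)) :=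
    ent_comp p'
      (e := fun v : (At × Et × Dt × Xt × Yt) × Bool =>
        (v.2, (v.1.2.2.2.2, v.1.2.2.1), v.1.1, v.1.2.1, v.1.2.2.2.1))
      (by rintro ⟨⟨a, e, d, x, y⟩, q⟩ ⟨⟨a', e', d', x', y'⟩, q'⟩ h; simp_all [Prod.mk.injEq])
      (fun ω' => ((ω'.2.1, ω'.2.2.1, ω'.2.2.2.1, ω'.2.2.2.2.1, ω'.2.2.2.2.2), ω'.1))
  have cvQu : ent p' (fun ω' => (ω'.1, ())) = ent p' (fun ω' => ω'.1) :=
    ent_comp p' (e := fun v : Bool => (v, ()))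
      (by rintro q q' h; simp_all [Prod.mk.injEq])
      (fun ω' => ω'.1)
  have cvYDu : ent p' (fun ω' => ((ω'.2.2.2.2.2, ω'.2.2.2.1), ()))
      = ent p' (fun ω' => (ω'.2.2.2.2.2, ω'.2.2.2.1)) :=
    ent_comp p' (e := fun v : Yt × Dt => (v, ()))
      (by rintro ⟨y, d⟩ ⟨y', d'⟩ h; simp_all [Prod.mk.injEq])
      (fun ω' => (ω'.2.2.2.2.2, ω'.2.2.2.1))
  have cvQYDu : ent p' (fun ω' => (ω'.1, (ω'.2.2.2.2.2, ω'.2.2.2.1), ()))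
      = ent p' (fun ω' => ((ω'.2.2.2.2.2, ω'.2.2.2.1), ω'.1)) :=
    ent_comp p' (e := fun v : (Yt × Dt) × Bool => (v.2, v.1, ()))
      (by rintro ⟨⟨y, d⟩, q⟩ ⟨⟨y', d'⟩, q'⟩ h; simp_all [Prod.mk.injEq])
      (fun ω' => ((ω'.2.2.2.2.2, ω'.2.2.2.1), ω'.1))
  have cvYDA : ent p' (fun ω' => ((ω'.2.2.2.2.2, ω'.2.2.2.1), ω'.2.1))
      = ent p' (fun ω' => (ω'.2.1, ω'.2.2.2.1, ω'.2.2.2.2.2)) :=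
    ent_comp p' (e := fun v : At × Dt × Yt => ((v.2.2, v.2.1), v.1))
      (by rintro ⟨a, d, y⟩ ⟨a', d', y'⟩ h; simp_all [Prod.mk.injEq])
      (fun ω' => (ω'.2.1, ω'.2.2.2.1, ω'.2.2.2.2.2))
  have cvQYDA : ent p' (fun ω' => (ω'.1, (ω'.2.2.2.2.2, ω'.2.2.2.1), ω'.2.1))
      = ent p' (fun ω' => ((ω'.2.1, ω'.2.2.2.1, ω'.2.2.2.2.2), ω'.1)) :=
    ent_comp p' (e := fun v : (At × Dt × Yt) × Bool => (v.2, (v.1.2.2, v.1.2.1), v.1.1))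
      (by rintro ⟨⟨a, d, y⟩, q⟩ ⟨⟨a', d', y'⟩, q'⟩ h; simp_all [Prod.mk.injEq])
      (fun ω' => ((ω'.2.1, ω'.2.2.2.1, ω'.2.2.2.2.2), ω'.1))
  have cvQAXYD : ent p'
        (fun ω' => (ω'.1, ω'.2.1, ω'.2.2.2.2.1, ω'.2.2.2.2.2, ω'.2.2.2.1))
      = ent p' (fun ω' => ((ω'.2.1, ω'.2.2.2.2.1, ω'.2.2.2.2.2, ω'.2.2.2.1), ω'.1)) :=
    ent_comp p' (e := fun v : (At × Xt × Yt × Dt) × Bool => (v.2, v.1))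
      (by rintro ⟨v, q⟩ ⟨v', q'⟩ h; simp_all [Prod.mk.injEq])
      (fun ω' => ((ω'.2.1, ω'.2.2.2.2.1, ω'.2.2.2.2.2, ω'.2.2.2.1), ω'.1))
  have cvEAXYD : ent p'
        (fun ω' => (ω'.2.2.1, ω'.2.1, ω'.2.2.2.2.1, ω'.2.2.2.2.2, ω'.2.2.2.1))
      = ent p' (fun ω' => (ω'.2.1, ω'.2.2.1, ω'.2.2.2.1, ω'.2.2.2.2.1, ω'.2.2.2.2.2)) :=
    ent_comp p'
      (e := fun v : At × Et × Dt × Xt × Yt => (v.2.1, v.1, v.2.2.2.1, v.2.2.2.2, v.2.2.1))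
      (by rintro ⟨a, e, d, x, y⟩ ⟨a', e', d', x', y'⟩ h; simp_all [Prod.mk.injEq])
      (fun ω' => (ω'.2.1, ω'.2.2.1, ω'.2.2.2.1, ω'.2.2.2.2.1, ω'.2.2.2.2.2))
  have cvQEAXYD : ent p'
        (fun ω' => (ω'.1, ω'.2.2.1, ω'.2.1, ω'.2.2.2.2.1, ω'.2.2.2.2.2, ω'.2.2.2.1))
      = ent p' (fun ω' =>
          ((ω'.2.1, ω'.2.2.1, ω'.2.2.2.1, ω'.2.2.2.2.1, ω'.2.2.2.2.2), ω'.1)) :=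
    ent_comp p'
      (e := fun v : (At × Et × Dt × Xt × Yt) × Bool =>
        (v.2, v.1.2.1, v.1.1, v.1.2.2.2.1, v.1.2.2.2.2, v.1.2.2.1))
      (by rintro ⟨⟨a, e, d, x, y⟩, q⟩ ⟨⟨a', e', d', x', y'⟩, q'⟩ h; simp_all [Prod.mk.injEq])
      (fun ω' => ((ω'.2.1, ω'.2.2.1, ω'.2.2.2.1, ω'.2.2.2.2.1, ω'.2.2.2.2.2), ω'.1))
  have cvQADXY : ent p'
        (fun ω' => (ω'.1, ω'.2.1, ω'.2.2.2.1, ω'.2.2.2.2.1, ω'.2.2.2.2.2))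
      = ent p' (fun ω' => ((ω'.2.1, ω'.2.2.2.1, ω'.2.2.2.2.1, ω'.2.2.2.2.2), ω'.1)) :=
    ent_comp p' (e := fun v : (At × Dt × Xt × Yt) × Bool => (v.2, v.1))
      (by rintro ⟨v, q⟩ ⟨v', q'⟩ h; simp_all [Prod.mk.injEq])
      (fun ω' => ((ω'.2.1, ω'.2.2.2.1, ω'.2.2.2.2.1, ω'.2.2.2.2.2), ω'.1))
  have cvEADXY : ent p'
        (fun ω' => (ω'.2.2.1, ω'.2.1, ω'.2.2.2.1, ω'.2.2.2.2.1, ω'.2.2.2.2.2))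
      = ent p' (fun ω' => (ω'.2.1, ω'.2.2.1, ω'.2.2.2.1, ω'.2.2.2.2.1, ω'.2.2.2.2.2)) :=
    ent_comp p'
      (e := fun v : At × Et × Dt × Xt × Yt => (v.2.1, v.1, v.2.2.1, v.2.2.2.1, v.2.2.2.2))
      (by rintro ⟨a, e, d, x, y⟩ ⟨a', e', d', x', y'⟩ h; simp_all [Prod.mk.injEq])
      (fun ω' => (ω'.2.1, ω'.2.2.1, ω'.2.2.2.1, ω'.2.2.2.2.1, ω'.2.2.2.2.2))
  have cvQEADXY : ent p'
        (fun ω' => (ω'.1, ω'.2.2.1, ω'.2.1, ω'.2.2.2.1, ω'.2.2.2.2.1, ω'.2.2.2.2.2))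
      = ent p' (fun ω' =>
          ((ω'.2.1, ω'.2.2.1, ω'.2.2.2.1, ω'.2.2.2.2.1, ω'.2.2.2.2.2), ω'.1)) :=
    ent_comp p'
      (e := fun v : (At × Et × Dt × Xt × Yt) × Bool =>
        (v.2, v.1.2.1, v.1.1, v.1.2.2.1, v.1.2.2.2.1, v.1.2.2.2.2))
      (by rintro ⟨⟨a, e, d, x, y⟩, q⟩ ⟨⟨a', e', d', x', y'⟩, q'⟩ h; simp_all [Prod.mk.injEq])
      (fun ω' => ((ω'.2.1, ω'.2.2.1, ω'.2.2.2.1, ω'.2.2.2.2.1, ω'.2.2.2.2.2), ω'.1))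
  -- core facts
  have hF1 : ent p' (fun ω' => (ω'.1, ω'.2.1)) + ent p' (fun ω' => (ω'.2.2.1, ω'.2.1))
      = ent p' (fun ω' => (ω'.1, ω'.2.2.1, ω'.2.1)) + ent p' (fun ω' => ω'.2.1) :=
    core_eq p' hp'0 (fun ω' => ω'.1) (fun ω' => ω'.2.2.1) (fun ω' => ω'.2.1)
      (CI1 PS PY PA₁ PA₂ PX₁ PX₂ l mυ hPS1 hPY1 hPX₁1 hPX₂1)
  rw [cvQA, cvEA, cvQEA, hQ_A, hm_AE, hQ_AE, hm_A] at hF1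
  have hF2 : ent p' (fun ω' => (ω'.1, ω'.2.1, ω'.2.2.1, ω'.2.2.2.2.1))
        + ent p' (fun ω' => ((ω'.2.2.2.2.2, ω'.2.2.2.1), ω'.2.1, ω'.2.2.1, ω'.2.2.2.2.1))
      = ent p' (fun ω' => (ω'.1, (ω'.2.2.2.2.2, ω'.2.2.2.1), ω'.2.1, ω'.2.2.1, ω'.2.2.2.2.1))
        + ent p' (fun ω' => (ω'.2.1, ω'.2.2.1, ω'.2.2.2.2.1)) :=
    core_eq p' hp'0 (fun ω' => ω'.1) (fun ω' => (ω'.2.2.2.2.2, ω'.2.2.2.1))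
      (fun ω' => (ω'.2.1, ω'.2.2.1, ω'.2.2.2.2.1))
      (CI2 PS PY PA₁ PA₂ PX₁ PX₂ l mυ hPY1)
  rw [cvQAEX, cvYDAEX, cvQYDAEX, hQ_AEX, hm_F5, hQ_F5, hm_AEX] at hF2
  have hF3 : ent p' (fun ω' => (ω'.1, (ω'.2.2.2.2.2, ω'.2.2.2.1), ()))
        + ent p' (fun _ => ())
      ≤ ent p' (fun ω' => (ω'.1, ()))
        + ent p' (fun ω' => ((ω'.2.2.2.2.2, ω'.2.2.2.1), ())) :=
    core_nonneg p' hp'0 hp'1 (fun ω' => ω'.1) (fun ω' => (ω'.2.2.2.2.2, ω'.2.2.2.1))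
      (fun _ => ())
  rw [cvQYDu, cvQu, cvYDu, hQ_YD, hu, hQv, hm_YD] at hF3
  have hF3' : ent p' (fun ω' => (ω'.1, (ω'.2.2.2.2.2, ω'.2.2.2.1), ω'.2.1))
        + ent p' (fun ω' => ω'.2.1)
      ≤ ent p' (fun ω' => (ω'.1, ω'.2.1))
        + ent p' (fun ω' => ((ω'.2.2.2.2.2, ω'.2.2.2.1), ω'.2.1)) :=
    core_nonneg p' hp'0 hp'1 (fun ω' => ω'.1) (fun ω' => (ω'.2.2.2.2.2, ω'.2.2.2.1))
      (fun ω' => ω'.2.1)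
  rw [cvQYDA, cvQA, cvYDA, hQ_ADY, hm_A, hQ_A, hm_ADY] at hF3'
  have hF4 : ent p' (fun ω' => (ω'.1, ω'.2.2.1, ω'.2.1, ω'.2.2.2.2.1, ω'.2.2.2.2.2, ω'.2.2.2.1))
        + ent p' (fun ω' => (ω'.2.1, ω'.2.2.2.2.1, ω'.2.2.2.2.2, ω'.2.2.2.1))
      ≤ ent p' (fun ω' => (ω'.1, ω'.2.1, ω'.2.2.2.2.1, ω'.2.2.2.2.2, ω'.2.2.2.1))
        + ent p' (fun ω' => (ω'.2.2.1, ω'.2.1, ω'.2.2.2.2.1, ω'.2.2.2.2.2, ω'.2.2.2.1)) :=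
    core_nonneg p' hp'0 hp'1 (fun ω' => ω'.1) (fun ω' => ω'.2.2.1)
      (fun ω' => (ω'.2.1, ω'.2.2.2.2.1, ω'.2.2.2.2.2, ω'.2.2.2.1))
  rw [cvQEAXYD, cvQAXYD, cvEAXYD, hQ_F5, hm_AXYD, hQ_AXYD, hm_F5] at hF4
  have hF4' : ent p' (fun ω' => (ω'.1, ω'.2.2.1, ω'.2.1, ω'.2.2.2.1, ω'.2.2.2.2.1, ω'.2.2.2.2.2))
        + ent p' (fun ω' => (ω'.2.1, ω'.2.2.2.1, ω'.2.2.2.2.1, ω'.2.2.2.2.2))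
      ≤ ent p' (fun ω' => (ω'.1, ω'.2.1, ω'.2.2.2.1, ω'.2.2.2.2.1, ω'.2.2.2.2.2))
        + ent p' (fun ω' => (ω'.2.2.1, ω'.2.1, ω'.2.2.2.1, ω'.2.2.2.2.1, ω'.2.2.2.2.2)) :=
    core_nonneg p' hp'0 hp'1 (fun ω' => ω'.1) (fun ω' => ω'.2.2.1)
      (fun ω' => (ω'.2.1, ω'.2.2.2.1, ω'.2.2.2.2.1, ω'.2.2.2.2.2))
  rw [cvQEADXY, cvQADXY, cvEADXY, hQ_F5, hm_ADXY, hQ_ADXY, hm_F5] at hF4'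
  -- scaled hypotheses
  have e1 : l * R1 ≤ l * (mi p₁ (fun ω => (ω.1, ω.2.2.2.1)) (fun ω => (ω.2.2.2.2, ω.2.2.1))
      - condMI p₁ (fun ω => ω.2.2.2.1) (fun ω => ω.2.1) (fun ω => ω.1)) :=
    mul_le_mul_of_nonneg_left hR1 hl
  have e2 : mυ * R2 ≤ mυ * (mi p₂ (fun ω => (ω.1, ω.2.2.2.1)) (fun ω => (ω.2.2.2.2, ω.2.2.1))
      - condMI p₂ (fun ω => ω.2.2.2.1) (fun ω => ω.2.1) (fun ω => ω.1)) :=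
    mul_le_mul_of_nonneg_left hR2 hmυ
  rw [redA p₁] at e1
  rw [redA p₂] at e2
  have e1' : l * T1 ≤ l * (condMI p₁ (fun ω => ω.2.2.2.1)
        (fun ω => (ω.2.2.2.2, ω.2.2.1)) (fun ω => ω.1)
      - condMI p₁ (fun ω => ω.2.2.2.1) (fun ω => ω.2.1) (fun ω => ω.1)) :=
    mul_le_mul_of_nonneg_left hT1 hl
  have e2' : mυ * T2 ≤ mυ * (condMI p₂ (fun ω => ω.2.2.2.1)
        (fun ω => (ω.2.2.2.2, ω.2.2.1)) (fun ω => ω.1)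
      - condMI p₂ (fun ω => ω.2.2.2.1) (fun ω => ω.2.1) (fun ω => ω.1)) :=
    mul_le_mul_of_nonneg_left hT2 hmυ
  rw [redB p₁] at e1'
  rw [redB p₂] at e2'
  refine ⟨PA, PXk, hPA0, hPA1, hPXk0, hPXk1, ?_, ?_, ?_⟩
  · show 0 ≤ l * R1 + mυ * R2
    exact add_nonneg (mul_nonneg hl hR1nn) (mul_nonneg hmυ hR2nn)
  · show l * R1 + mυ * R2 ≤ mi p (fun ω => (ω.1, ω.2.2.2.1)) (fun ω => (ω.2.2.2.2, ω.2.2.1))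
      - condMI p (fun ω => ω.2.2.2.1) (fun ω => ω.2.1) (fun ω => ω.1)
    rw [redA p]
    linarith [e1, e2, hF1, hF2, hF3, hF4]
  · show l * T1 + mυ * T2 ≤ condMI p (fun ω => ω.2.2.2.1)
        (fun ω => (ω.2.2.2.2, ω.2.2.1)) (fun ω => ω.1)
      - condMI p (fun ω => ω.2.2.2.1) (fun ω => ω.2.1) (fun ω => ω.1)
    rw [redB p]
    linarith [e1', e2', hF1, hF2, hF3', hF4']

  

end Region
end
end
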